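/- Let A ∈ ℝ^{n×n}, B ∈ ℝ^{n×m}, let Q ∈ ℝ^{n×n} be symmetric positive semidefinite, R ∈ ℝ^{m×m} symmetric positive definite, and W ∈ ℝ^{n×n} symmetric positive definite. Suppose P* ∈ ℝ^{n×n} is symmetric positive semidefinite and satisfies P* = AᵀP*A + Q − AᵀP*B(R+BᵀP*B)⁻¹BᵀP*A; set K* = −(R+BᵀP*B)⁻¹BᵀP*A, assume A + BK* is Schur stable, and let X* be the symmetric solution of (A+BK*)X*(A+BK*)ᵀ − X* + W = 0. Let K ∈ ℝ^{m×n} with A + BK Schur stable, let X be the symmetric solution of (A+BK)X(A+BK)ᵀ − X + W = 0, and let P be the symmetric solution of (A+BK)ᵀP(A+BK) − P + Q + KᵀRK = 0. Then trace((Q+KᵀRK)X) − trace((Q+K*ᵀRK*)X*) ≤ 2·trace((K−K*)ᵀ((R+BᵀPB)K + BᵀPA)X*). -/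

import Mathlib

open Matrix

noncomputable section

open Filter Topology
open scoped ENNReal NNReal

/-- A real square matrix is Schur stable if every complex eigenvalue has modulus < 1. -/
def IsSchur {n : ℕ} (M : Matrix (Fin n) (Fin n) ℝ) : Prop :=
  ∀ μ ∈ spectrum ℂ (M.map Complex.ofReal), ‖μ‖ < 1

section aux
attribute [local instance] Matrix.linftyOpNormedRing Matrix.linftyOpNormedAlgebra
  Matrix.linftyOpNormedAddCommGroup

private lemma entry_le_linfty {n : ℕ} (N : Matrix (Fin n) (Fin n) ℂ) (i j : Fin n) :
    ‖N i j‖ ≤ ‖N‖ := by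
  have h1 : ‖N i j‖₊ ≤ ∑ j', ‖N i j'‖₊ :=
    Finset.single_le_sum (f := fun j' => ‖N i j'‖₊) (fun _ _ => zero_le) (Finset.mem_univ j)
  have h2 : (∑ j', ‖N i j'‖₊) ≤ Finset.univ.sup fun i => ∑ j', ‖N i j'‖₊ :=
    Finset.le_sup (f := fun i => ∑ j', ‖N i j'‖₊) (Finset.mem_univ i)
  have := h1.trans h2
  rw [← Matrix.linfty_opNNNorm_def] at this
  exact_mod_cast this

private lemma cnorm_pow_tendsto {n : ℕ} (M : Matrix (Fin n) (Fin n) ℂ)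
    (hρ : spectralRadius ℂ M < 1) :
    Tendsto (fun k : ℕ => ‖M ^ k‖) atTop (𝓝 0) := by
  obtain ⟨r, hr1, hr2⟩ := ENNReal.lt_iff_exists_nnreal_btwn.mp hρ
  have hG := spectrum.pow_nnnorm_pow_one_div_tendsto_nhds_spectralRadius M
  have hev : ∀ᶠ k : ℕ in atTop, (‖M ^ k‖₊ : ℝ≥0∞) ^ (1 / (k : ℝ)) < r :=
    hG.eventually_lt_const hr1
  have hr2' : (r : ℝ) < 1 := by exact_mod_cast hr2
  have hbound : ∀ᶠ k : ℕ in atTop, ‖M ^ k‖ ≤ (r : ℝ) ^ k := by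
    filter_upwards [hev, eventually_ge_atTop 1] with k hk hk1
    have hkpos : (0 : ℝ) < k := by positivity
    have : ((‖M ^ k‖₊ : ℝ≥0∞) ^ (1 / (k : ℝ))) ^ (k : ℝ) < (r : ℝ≥0∞) ^ (k : ℝ) :=
      ENNReal.rpow_lt_rpow hk hkpos
    rw [← ENNReal.rpow_mul, one_div,
      inv_mul_cancel₀ (ne_of_gt hkpos), ENNReal.rpow_one, ENNReal.rpow_natCast] at this
    have h2 : (‖M ^ k‖₊ : ℝ≥0∞) < ((r ^ k : ℝ≥0) : ℝ≥0∞) := by rwa [ENNReal.coe_pow]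
    rw [ENNReal.coe_lt_coe] at h2
    exact_mod_cast h2.le
  exact squeeze_zero' (Eventually.of_forall fun k => norm_nonneg _) hbound
    (tendsto_pow_atTop_nhds_zero_of_lt_one r.coe_nonneg hr2')

lemma schur_pow_tendsto {n : ℕ} {M : Matrix (Fin n) (Fin n) ℝ} (hM : IsSchur M) :
    Tendsto (fun k : ℕ => M ^ k) atTop (𝓝 0) := by
  rcases Nat.eq_zero_or_pos n with hn | hn
  · subst hn
    have : ∀ k : ℕ, M ^ k = 0 := fun k => Subsingleton.elim _ _
    simp only [this]
    exact tendsto_const_nhds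
  · have : NeZero n := ⟨hn.ne'⟩
    set Mc : Matrix (Fin n) (Fin n) ℂ := M.map Complex.ofReal with hMc
    have hρ : spectralRadius ℂ Mc < 1 := by
      have := spectrum.spectralRadius_lt_of_forall_lt Mc (r := 1) ?_
      · simpa using this
      · intro z hz
        have h2 := hM z hz
        exact_mod_cast h2
    have hnorm := cnorm_pow_tendsto Mc hρ
    have hmap : ∀ k : ℕ, Mc ^ k = (M ^ k).map Complex.ofReal := by
      intro k
      induction k with
      | zero => simp [hMc]
      | succ k ih =>
        rw [pow_succ, pow_succ, ih, hMc]
        ext i j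
        simp [Matrix.mul_apply, Matrix.map_apply]
    refine tendsto_pi_nhds.mpr ?_
    intro i
    rw [tendsto_pi_nhds]
    intro j
    have hbound : ∀ k : ℕ, ‖(M ^ k) i j‖ ≤ ‖Mc ^ k‖ := by
      intro k
      rw [hmap k]
      simpa [Matrix.map_apply] using
        entry_le_linfty ((M ^ k).map Complex.ofReal) i j
    simpa using squeeze_zero_norm hbound hnorm

end aux

lemma real_transpose_eq {k l : ℕ} (N : Matrix (Fin k) (Fin l) ℝ) : Nᴴ = Nᵀ :=
  Matrix.conjTranspose_eq_transpose_of_trivial N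

lemma lyap_psd {n : ℕ} {M Y C : Matrix (Fin n) (Fin n) ℝ} (hM : IsSchur M)
    (hY : Y.IsHermitian) (hC : C.PosSemidef) (h : Y = M * Y * Mᵀ + C) :
    Y.PosSemidef := by
  refine .of_dotProduct_mulVec_nonneg hY fun x => ?_
  set f : ℕ → ℝ := fun k => star x ⬝ᵥ ((M ^ k * Y * (M ^ k)ᵀ) *ᵥ x) with hf
  have hstep : ∀ k, f (k + 1) ≤ f k := by
    intro k
    have hd : M ^ k * Y * (M ^ k)ᵀ - M ^ (k + 1) * Y * (M ^ (k + 1))ᵀ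
        = M ^ k * C * (M ^ k)ᵀ := by
      have : Y - M * Y * Mᵀ = C := by nth_rewrite 1 [h]; abel
      calc M ^ k * Y * (M ^ k)ᵀ - M ^ (k + 1) * Y * (M ^ (k + 1))ᵀ
          = M ^ k * (Y - M * Y * Mᵀ) * (M ^ k)ᵀ := by
            rw [pow_succ, Matrix.transpose_mul]
            noncomm_ring
        _ = M ^ k * C * (M ^ k)ᵀ := by rw [this]
    have hpsd : (M ^ k * C * (M ^ k)ᵀ).PosSemidef := by
      have := hC.mul_mul_conjTranspose_same (M ^ k)
      rwa [real_transpose_eq] at this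
    have := hpsd.dotProduct_mulVec_nonneg x
    rw [← hd] at this
    have h2 : star x ⬝ᵥ ((M ^ k * Y * (M ^ k)ᵀ) *ᵥ x)
        - star x ⬝ᵥ ((M ^ (k + 1) * Y * (M ^ (k + 1))ᵀ) *ᵥ x)
        = star x ⬝ᵥ ((M ^ k * Y * (M ^ k)ᵀ - M ^ (k + 1) * Y * (M ^ (k + 1))ᵀ) *ᵥ x) := by
      rw [Matrix.sub_mulVec, dotProduct_sub]
    rw [← hd] at hpsd
    have h3 := hpsd.dotProduct_mulVec_nonneg x
    rw [← h2] at h3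
    simpa [hf] using sub_nonneg.mp h3
  have hanti : ∀ k, f k ≤ f 0 := by
    intro k
    induction k with
    | zero => exact le_refl _
    | succ k ih => exact (hstep k).trans ih
  have hcont : Continuous fun N : Matrix (Fin n) (Fin n) ℝ =>
      star x ⬝ᵥ ((N * Y * Nᵀ) *ᵥ x) :=
    continuous_const.dotProduct
      ((((continuous_id.matrix_mul continuous_const).matrix_mul
        continuous_id.matrix_transpose)).matrix_mulVec continuous_const)
  have htend : Filter.Tendsto f Filter.atTop (𝓝 (star x ⬝ᵥ (((0 : Matrix (Fin n) (Fin n) ℝ) * Y * (0 : Matrix (Fin n) (Fin n) ℝ)ᵀ) *ᵥ x))) :=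
    (hcont.tendsto 0).comp (schur_pow_tendsto hM)
  have hzero : star x ⬝ᵥ (((0 : Matrix (Fin n) (Fin n) ℝ) * Y * (0 : Matrix (Fin n) (Fin n) ℝ)ᵀ) *ᵥ x) = 0 := by simp
  rw [hzero] at htend
  have h0 : (0:ℝ) ≤ f 0 := le_of_tendsto htend (Filter.Eventually.of_forall hanti)
  simpa [hf, pow_zero, Matrix.transpose_one] using h0

lemma trace_mul_psd_nonneg {n : ℕ} {A B : Matrix (Fin n) (Fin n) ℝ}
    (hA : A.PosSemidef) (hB : B.PosSemidef) : 0 ≤ (A * B).trace := by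
  obtain ⟨C, hC⟩ : ∃ C : Matrix (Fin n) (Fin n) ℝ, A = Cᴴ * C := by
    open scoped MatrixOrder in
    obtain ⟨C, hC⟩ := CStarAlgebra.nonneg_iff_eq_star_mul_self.mp hA.nonneg
    exact ⟨C, hC⟩
  obtain ⟨D, hD⟩ : ∃ D : Matrix (Fin n) (Fin n) ℝ, B = Dᴴ * D := by
    open scoped MatrixOrder in
    obtain ⟨D, hD⟩ := CStarAlgebra.nonneg_iff_eq_star_mul_self.mp hB.nonneg
    exact ⟨D, hD⟩
  have e : A * B = Cᴴ * (C * Dᴴ * D) := by rw [hC, hD]; noncomm_ring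
  rw [e, Matrix.trace_mul_comm]
  have e2 : C * Dᴴ * D * Cᴴ = (C * Dᴴ) * (C * Dᴴ)ᴴ := by
    rw [Matrix.conjTranspose_mul, Matrix.conjTranspose_conjTranspose]; noncomm_ring
  rw [e2]
  have e3 : ((C * Dᴴ) * (C * Dᴴ)ᴴ).trace = ∑ i, ∑ j, (C * Dᴴ) i j * (C * Dᴴ) i j := by
    simp [Matrix.trace, Matrix.mul_apply, Matrix.diag, Matrix.conjTranspose_apply,
      mul_comm]
  rw [e3]
  exact Finset.sum_nonneg fun i _ => Finset.sum_nonneg fun j _ => mul_self_nonneg _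

lemma isSchur_transpose {n : ℕ} {M : Matrix (Fin n) (Fin n) ℝ} (hM : IsSchur M) :
    IsSchur Mᵀ := by
  intro μ hμ
  apply hM μ
  rw [spectrum.mem_iff] at hμ ⊢
  intro hcon
  apply hμ
  rw [Matrix.isUnit_iff_isUnit_det] at hcon ⊢
  have htr : (Mᵀ).map Complex.ofReal = (M.map Complex.ofReal)ᵀ := rfl
  rw [htr]
  have : algebraMap ℂ (Matrix (Fin n) (Fin n) ℂ) μ - (M.map Complex.ofReal)ᵀ
      = (algebraMap ℂ (Matrix (Fin n) (Fin n) ℂ) μ - M.map Complex.ofReal)ᵀ := by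
    rw [Matrix.transpose_sub]
    congr 1
    rw [Matrix.algebraMap_eq_diagonal]
    exact (Matrix.diagonal_transpose _).symm
  rw [this, Matrix.det_transpose]
  exact hcon

private lemma rearr {n : ℕ} {a b c : Matrix (Fin n) (Fin n) ℝ}
    (h : a - b + c = 0) : b - a = c := by
  have h2 : b - a - c = -(a - b + c) := by abel
  rw [h, neg_zero] at h2
  exact sub_eq_zero.mp h2


/-- Upper bound on the optimality gap in the discrete-time LQR. -/
theorem stmt_7 {n m : ℕ}
    (A : Matrix (Fin n) (Fin n) ℝ) (B : Matrix (Fin n) (Fin m) ℝ)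
    (Q W Pstar Xstar X P : Matrix (Fin n) (Fin n) ℝ)
    (R : Matrix (Fin m) (Fin m) ℝ)
    (K Kstar : Matrix (Fin m) (Fin n) ℝ)
    (hQ : Q.PosSemidef) (hR : R.PosDef) (hW : W.PosDef)
    (hPs : Pstar.PosSemidef)
    (hRic : Pstar = Aᵀ * Pstar * A + Q -
      Aᵀ * Pstar * B * (R + Bᵀ * Pstar * B)⁻¹ * Bᵀ * Pstar * A)
    (hKs : Kstar = -((R + Bᵀ * Pstar * B)⁻¹ * Bᵀ * Pstar * A))
    (hSchurKs : IsSchur (A + B * Kstar))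
    (hXs : Xstar.IsHermitian)
    (hXsEq : (A + B * Kstar) * Xstar * (A + B * Kstar)ᵀ - Xstar + W = 0)
    (hSchurK : IsSchur (A + B * K))
    (hX : X.IsHermitian)
    (hXEq : (A + B * K) * X * (A + B * K)ᵀ - X + W = 0)
    (hP : P.IsHermitian)
    (hPEq : (A + B * K)ᵀ * P * (A + B * K) - P + Q + Kᵀ * R * K = 0) :
    Matrix.trace ((Q + Kᵀ * R * K) * X) -
        Matrix.trace ((Q + Kstarᵀ * R * Kstar) * Xstar) ≤
      2 * Matrix.trace ((K - Kstar)ᵀ * ((R + Bᵀ * P * B) * K + Bᵀ * P * A) * Xstar) := by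
  have hPt : Pᵀ = P := by rw [← real_transpose_eq]; exact hP
  have hRt : Rᵀ = R := by rw [← real_transpose_eq]; exact hR.isHermitian
  have hXst : Xstarᵀ = Xstar := by rw [← real_transpose_eq]; exact hXs
  set L := A + B * K with hL
  set Ls := A + B * Kstar with hLs
  set Dl := K - Kstar with hD
  set Sm := R + Bᵀ * P * B with hS
  set Em := Sm * K + Bᵀ * P * A with hE
  -- rearranged equations
  have hW1 : X - L * X * Lᵀ = W := rearr hXEq
  have hWs1 : Xstar - Ls * Xstar * Lsᵀ = W := rearr hXsEq
  have hQK : Q + Kᵀ * R * K = P - Lᵀ * P * L := by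
    have h2 : Lᵀ * P * L - P + (Q + Kᵀ * R * K) = 0 := by
      rw [← hPEq]; abel
    exact (rearr h2).symm
  -- P is PSD
  have hKRK : (Kᵀ * R * K).PosSemidef := by
    have := hR.posSemidef.conjTranspose_mul_mul_same K
    rwa [real_transpose_eq] at this
  have hPfix : P = Lᵀ * P * (Lᵀ)ᵀ + (Q + Kᵀ * R * K) := by
    rw [Matrix.transpose_transpose, hQK]; abel
  have hPpsd : P.PosSemidef :=
    lyap_psd (isSchur_transpose hSchurK) hP (hQ.add hKRK) hPfix
  -- Xstar is PSD
  have hXsfix : Xstar = Ls * Xstar * Lsᵀ + W := by rw [← hWs1]; abel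
  have hXspsd : Xstar.PosSemidef := lyap_psd hSchurKs hXs hW.posSemidef hXsfix
  -- S and DᵀSD are PSD
  have hSpsd : Sm.PosSemidef := by
    rw [hS]
    refine hR.posSemidef.add ?_
    have := hPpsd.conjTranspose_mul_mul_same B
    rwa [real_transpose_eq] at this
  have hDSD : (Dlᵀ * Sm * Dl).PosSemidef := by
    have := hSpsd.conjTranspose_mul_mul_same Dl
    rwa [real_transpose_eq] at this
  have htr : 0 ≤ (Dlᵀ * Sm * Dl * Xstar).trace :=
    trace_mul_psd_nonneg hDSD hXspsd
  -- trace identities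
  have t1 : ((Q + Kᵀ * R * K) * X).trace = (P * W).trace := by
    rw [hQK, ← hW1, Matrix.sub_mul, Matrix.mul_sub, Matrix.trace_sub, Matrix.trace_sub]
    congr 1
    rw [show Lᵀ * P * L * X = Lᵀ * (P * L * X) by noncomm_ring, Matrix.trace_mul_comm,
      show P * L * X * Lᵀ = P * (L * X * Lᵀ) by noncomm_ring]
  have t2 : (P * W).trace = ((P - Lsᵀ * P * Ls) * Xstar).trace := by
    rw [← hWs1, Matrix.sub_mul, Matrix.mul_sub, Matrix.trace_sub, Matrix.trace_sub]
    congr 1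
    rw [show Lsᵀ * P * Ls * Xstar = Lsᵀ * (P * Ls * Xstar) from by noncomm_ring,
      Matrix.trace_mul_comm Lsᵀ (P * Ls * Xstar)]
    congr 1
    noncomm_ring
  have t3 : P - Lsᵀ * P * Ls
      = Q + Kstarᵀ * R * Kstar + (Dlᵀ * Em + Emᵀ * Dl - Dlᵀ * Sm * Dl) := by
    have key : (P - Lsᵀ * P * Ls)
        - (Q + Kstarᵀ * R * Kstar + (Dlᵀ * Em + Emᵀ * Dl - Dlᵀ * Sm * Dl))
        = -(Lᵀ * P * L - P + (Q + Kᵀ * R * K)) := by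
      simp only [hL, hLs, hD, hS, hE, Matrix.transpose_mul, Matrix.transpose_add,
        Matrix.transpose_sub, Matrix.transpose_transpose, hPt, hRt, Matrix.add_mul,
        Matrix.mul_add, Matrix.sub_mul, Matrix.mul_sub, Matrix.neg_mul, Matrix.mul_neg,
        Matrix.mul_assoc]
      abel
    have h2 : Lᵀ * P * L - P + (Q + Kᵀ * R * K) = 0 := by rw [← hPEq]; abel
    rw [h2, neg_zero] at key
    exact sub_eq_zero.mp key
  have hsym : (Emᵀ * Dl * Xstar).trace = (Dlᵀ * Em * Xstar).trace := by
    rw [← Matrix.trace_transpose (Emᵀ * Dl * Xstar)]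
    rw [show (Emᵀ * Dl * Xstar)ᵀ = Xstarᵀ * (Dlᵀ * Em) by
      rw [Matrix.transpose_mul, Matrix.transpose_mul, Matrix.transpose_transpose]]
    rw [hXst, Matrix.trace_mul_comm]
  calc ((Q + Kᵀ * R * K) * X).trace - ((Q + Kstarᵀ * R * Kstar) * Xstar).trace
      = ((P - Lsᵀ * P * Ls) * Xstar).trace
          - ((Q + Kstarᵀ * R * Kstar) * Xstar).trace := by rw [t1, t2]
    _ = ((Dlᵀ * Em + Emᵀ * Dl - Dlᵀ * Sm * Dl) * Xstar).trace := by
          rw [t3, Matrix.add_mul, Matrix.trace_add]; ring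
    _ = 2 * (Dlᵀ * Em * Xstar).trace - (Dlᵀ * Sm * Dl * Xstar).trace := by
          rw [Matrix.sub_mul, Matrix.add_mul, Matrix.trace_sub, Matrix.trace_add, hsym]
          ring
    _ ≤ 2 * (Dlᵀ * Em * Xstar).trace := by linarith
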